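/- Let n ≥ 1, suppose X_1, …, X_h ∈ R satisfy f^{(n)}(X_i) = 0 for all i, and let M = (a_{ij}) ∈ M_h(F_q[t]). Then Σ_{i=1}^h μ_n(X_1, …, X_{i−1}, (M⋆X)_i, X_{i+1}, …, X_h) = [tr M]_g(μ_n(X_1, …, X_h)), where tr M = Σ_i a_{ii} ∈ F_q[t]. -/

import Mathlib

open Finset

noncomputable section

/-- The Moore determinant `μ(X₁, …, X_h) = det (Xᵢ^{q^{j-1}})`. -/
def moore (q : ℕ) {h : ℕ} {R : Type*} [CommRing R] (X : Fin h → R) : R :=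
  Matrix.det (Matrix.of fun i j : Fin h => X i ^ q ^ (j : ℕ))

/-- `f(X) = πX + u₁X^q + ⋯ + u_{h−1}X^{q^{h−1}} + X^{q^h}`. -/
def fmap (q h : ℕ) {R : Type*} [CommRing R] (π : R) (u : ℕ → R) (X : R) : R :=
  π * X + (∑ k ∈ Finset.Ico 1 h, u k * X ^ q ^ k) + X ^ q ^ h

/-- `μ_n(X₁, …, X_h) = Σ μ(f^(a₁)(X₁), …, f^(a_h)(X_h))`, the sum over all tuples
`(a₁, …, a_h)` with `0 ≤ aᵢ ≤ n−1` and `a₁ + ⋯ + a_h = (h−1)(n−1)`. -/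
def mooreN (q h n : ℕ) {R : Type*} [CommRing R] (π : R) (u : ℕ → R) (X : Fin h → R) : R :=
  ∑ a ∈ Finset.univ.filter
      (fun a : Fin h → Fin n => ∑ i, (a i : ℕ) = (h - 1) * (n - 1)),
    moore q (fun i => (fmap q h π u)^[(a i : ℕ)] (X i))

/-- `g(T) = πT + (−1)^{h−1}T^q`. -/
def gmap (q h : ℕ) {R : Type*} [CommRing R] (π : R) (T : R) : R :=
  π * T + (-1) ^ (h - 1) * T ^ q

/-- For a polynomial `a = Σ c_m t^m ∈ F_q[t]`, `[a]_f(X) := Σ c_m f^(m)(X)`. -/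
def actF (q h : ℕ) {R : Type*} [CommRing R] (π : R) (u : ℕ → R)
    (K : Type*) [Field K] [Algebra K R] (a : Polynomial K) (X : R) : R :=
  ∑ m ∈ a.support, algebraMap K R (a.coeff m) * (fmap q h π u)^[m] X

/-- For a polynomial `a = Σ c_m t^m ∈ F_q[t]`, `[a]_g(T) := Σ c_m g^(m)(T)`. -/
def actG (q h : ℕ) {R : Type*} [CommRing R] (π : R)
    (K : Type*) [Field K] [Algebra K R] (a : Polynomial K) (T : R) : R :=
  ∑ m ∈ a.support, algebraMap K R (a.coeff m) * (gmap q h π)^[m] T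

/-- For `M = (a_{ij}) ∈ M_h(F_q[t])` and `Z ∈ R^h`, `(M⋆Z)ᵢ := Σ_j [a_{ij}]_f(Z_j)`. -/
def mStar (q h : ℕ) {R : Type*} [CommRing R] (π : R) (u : ℕ → R)
    (K : Type*) [Field K] [Algebra K R]
    (M : Matrix (Fin h) (Fin h) (Polynomial K)) (Z : Fin h → R) (i : Fin h) : R :=
  ∑ j, actF q h π u K (M i j) (Z j)

section Aux

variable {R : Type*} [CommRing R]

lemma qpow_add (q : ℕ) (hq : q ≠ 0) (φ : R →+* R) (hφ : ∀ x, φ x = x ^ q) (j : ℕ) (x y : R) :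
    (x + y) ^ q ^ j = x ^ q ^ j + y ^ q ^ j := by
  induction j with
  | zero => simp
  | succ j ih =>
    have key : ∀ z : R, z ^ q ^ (j + 1) = φ (z ^ q ^ j) := by
      intro z; rw [hφ, ← pow_mul, pow_succ]
    rw [key, key, key, ih, map_add]

/-- The `q`-power Frobenius packaged as a ring hom. -/
def qpowHom (q : ℕ) (hq : q ≠ 0) (φ : R →+* R) (hφ : ∀ x, φ x = x ^ q) (j : ℕ) : R →+* R where
  toFun x := x ^ q ^ j
  map_one' := one_pow _
  map_mul' x y := mul_pow x y _
  map_zero' := zero_pow (pow_ne_zero _ hq)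
  map_add' x y := qpow_add q hq φ hφ j x y

lemma qpow_fixed (q : ℕ) {c : R} (hc : c ^ q = c) (j : ℕ) : c ^ q ^ j = c := by
  induction j with
  | zero => simp
  | succ j ih => rw [pow_succ, pow_mul, ih, hc]

variable (q h : ℕ) (π : R) (u : ℕ → R)

lemma fmap_zero (hq : q ≠ 0) : fmap q h π u 0 = 0 := by
  simp [fmap, zero_pow (pow_ne_zero _ hq)]

lemma fmap_iterate_zero (hq : q ≠ 0) (m : ℕ) : (fmap q h π u)^[m] 0 = 0 :=
  Function.iterate_fixed (fmap_zero q h π u hq) m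

lemma fmap_iterate_eq_zero (hq : q ≠ 0) {x : R} {n : ℕ}
    (hx : (fmap q h π u)^[n] x = 0) {m : ℕ} (hm : n ≤ m) :
    (fmap q h π u)^[m] x = 0 := by
  obtain ⟨d, rfl⟩ := Nat.exists_eq_add_of_le hm
  rw [add_comm, Function.iterate_add_apply, hx, fmap_iterate_zero q h π u hq]

lemma fmap_add (hq : q ≠ 0) (φ : R →+* R) (hφ : ∀ x, φ x = x ^ q) (x y : R) :
    fmap q h π u (x + y) = fmap q h π u x + fmap q h π u y := by
  simp only [fmap, qpow_add q hq φ hφ, mul_add, Finset.sum_add_distrib]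
  ring

lemma fmap_smul {c : R} (hc : c ^ q = c) (x : R) :
    fmap q h π u (c * x) = c * fmap q h π u x := by
  simp only [fmap, mul_pow, qpow_fixed q hc]
  rw [mul_add, mul_add, Finset.mul_sum]
  rw [Finset.sum_congr rfl (fun k _ => by ring : ∀ k ∈ Finset.Ico 1 h, u k * (c * x ^ q ^ k) = c * (u k * x ^ q ^ k))]
  ring

lemma fmap_iterate_add (hq : q ≠ 0) (φ : R →+* R) (hφ : ∀ x, φ x = x ^ q) (m : ℕ) (x y : R) :
    (fmap q h π u)^[m] (x + y) = (fmap q h π u)^[m] x + (fmap q h π u)^[m] y := by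
  induction m with
  | zero => simp
  | succ m ih =>
    rw [Function.iterate_succ_apply', Function.iterate_succ_apply',
      Function.iterate_succ_apply', ih, fmap_add q h π u hq φ hφ]

lemma fmap_iterate_smul {c : R} (hc : c ^ q = c) (m : ℕ) (x : R) :
    (fmap q h π u)^[m] (c * x) = c * (fmap q h π u)^[m] x := by
  induction m with
  | zero => simp
  | succ m ih =>
    rw [Function.iterate_succ_apply', Function.iterate_succ_apply', ih, fmap_smul q h π u hc]

lemma gmap_zero (hq : q ≠ 0) : gmap q h π 0 = 0 := by
  simp [gmap, zero_pow hq]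

lemma gmap_add (hq : q ≠ 0) (φ : R →+* R) (hφ : ∀ x, φ x = x ^ q) (x y : R) :
    gmap q h π (x + y) = gmap q h π x + gmap q h π y := by
  have := qpow_add q hq φ hφ 1 x y
  rw [pow_one] at this
  simp only [gmap, this]
  ring

lemma gmap_smul {c : R} (hc : c ^ q = c) (x : R) :
    gmap q h π (c * x) = c * gmap q h π x := by
  simp only [gmap, mul_pow, hc]
  ring

lemma gmap_iterate_zero (hq : q ≠ 0) (m : ℕ) : (gmap q h π)^[m] 0 = 0 :=
  Function.iterate_fixed (gmap_zero q h π hq) m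

end Aux

section Moore

variable {R : Type*} [CommRing R] (q : ℕ)

lemma moore_matrix_update {h : ℕ} (X : Fin h → R) (i : Fin h) (w : R) :
    (Matrix.of fun k j : Fin h => (Function.update X i w) k ^ q ^ (j : ℕ))
      = Matrix.updateRow (Matrix.of fun k j : Fin h => X k ^ q ^ (j : ℕ)) i
          (fun j => w ^ q ^ (j : ℕ)) := by
  ext k j
  rcases eq_or_ne k i with rfl | hk
  · simp
  · simp [Matrix.updateRow_apply, hk, Function.update_apply]

lemma moore_update_add {h : ℕ} (hq : q ≠ 0) (φ : R →+* R) (hφ : ∀ x, φ x = x ^ q)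
    (X : Fin h → R) (i : Fin h) (y z : R) :
    moore q (Function.update X i (y + z))
      = moore q (Function.update X i y) + moore q (Function.update X i z) := by
  unfold moore
  rw [moore_matrix_update, moore_matrix_update, moore_matrix_update]
  have : (fun j : Fin h => (y + z) ^ q ^ (j : ℕ))
      = (fun j : Fin h => y ^ q ^ (j : ℕ)) + (fun j : Fin h => z ^ q ^ (j : ℕ)) := by
    funext j; exact qpow_add q hq φ hφ _ y z
  rw [this, Matrix.det_updateRow_add]

lemma moore_update_smul {h : ℕ} {c : R} (hc : c ^ q = c)
    (X : Fin h → R) (i : Fin h) (y : R) :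
    moore q (Function.update X i (c * y)) = c * moore q (Function.update X i y) := by
  unfold moore
  rw [moore_matrix_update, moore_matrix_update]
  have : (fun j : Fin h => (c * y) ^ q ^ (j : ℕ)) = c • (fun j : Fin h => y ^ q ^ (j : ℕ)) := by
    funext j; simp [mul_pow, qpow_fixed q hc]
  rw [this, Matrix.det_updateRow_smul]

lemma moore_update_zero {h : ℕ} (hq : q ≠ 0) (X : Fin h → R) (i : Fin h) :
    moore q (Function.update X i 0) = 0 := by
  apply Matrix.det_eq_zero_of_row_eq_zero i
  intro j
  simp [Function.update_self, zero_pow (pow_ne_zero _ hq)]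

variable (h n : ℕ) (π : R) (u : ℕ → R)

lemma iter_update (X : Fin h → R) (i : Fin h) (y : R) (a : Fin h → ℕ) :
    (fun k => (fmap q h π u)^[a k] (Function.update X i y k))
      = Function.update (fun k => (fmap q h π u)^[a k] (X k)) i ((fmap q h π u)^[a i] y) := by
  funext k
  rcases eq_or_ne k i with rfl | hk
  · simp
  · simp [Function.update_apply, hk]

lemma mooreN_update_add (hq : q ≠ 0) (φ : R →+* R) (hφ : ∀ x, φ x = x ^ q)
    (X : Fin h → R) (i : Fin h) (y z : R) :
    mooreN q h n π u (Function.update X i (y + z))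
      = mooreN q h n π u (Function.update X i y) + mooreN q h n π u (Function.update X i z) := by
  unfold mooreN
  rw [← Finset.sum_add_distrib]
  refine Finset.sum_congr rfl fun a _ => ?_
  rw [iter_update, iter_update, iter_update, fmap_iterate_add q h π u hq φ hφ,
    moore_update_add q hq φ hφ]

lemma mooreN_update_smul {c : R} (hc : c ^ q = c)
    (X : Fin h → R) (i : Fin h) (y : R) :
    mooreN q h n π u (Function.update X i (c * y))
      = c * mooreN q h n π u (Function.update X i y) := by
  unfold mooreN
  rw [Finset.mul_sum]
  refine Finset.sum_congr rfl fun a _ => ?_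
  rw [iter_update, iter_update, fmap_iterate_smul q h π u hc, moore_update_smul q hc]

lemma mooreN_update_zero (hq : q ≠ 0) (X : Fin h → R) (i : Fin h) :
    mooreN q h n π u (Function.update X i 0) = 0 := by
  unfold mooreN
  refine Finset.sum_eq_zero fun a _ => ?_
  rw [iter_update, fmap_iterate_zero q h π u hq, moore_update_zero q hq]

lemma mooreN_update_sum (hq : q ≠ 0) (φ : R →+* R) (hφ : ∀ x, φ x = x ^ q)
    (X : Fin h → R) (i : Fin h) {ι : Type*} (s : Finset ι) (v : ι → R) :
    mooreN q h n π u (Function.update X i (∑ j ∈ s, v j))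
      = ∑ j ∈ s, mooreN q h n π u (Function.update X i (v j)) := by
  classical
  induction s using Finset.induction_on with
  | empty => simpa using mooreN_update_zero q h n π u hq X i
  | insert _ _ hx ih =>
    rw [Finset.sum_insert hx, Finset.sum_insert hx, mooreN_update_add q h n π u hq φ hφ, ih]

/-- Alternating property: plugging `X j` into slot `i ≠ j` kills `μ_n`. -/
lemma mooreN_update_apply_ne (X : Fin h → R) {i j : Fin h} (hij : i ≠ j) :
    mooreN q h n π u (Function.update X i (X j)) = 0 := by
  classical
  unfold mooreN
  set X' := Function.update X i (X j) with hX'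
  have hX'swap : ∀ k, X' (Equiv.swap i j k) = X' k := by
    intro k
    rcases eq_or_ne k i with rfl | hki
    · simp [hX', Equiv.swap_apply_left, Function.update_apply, hij, hij.symm]
    rcases eq_or_ne k j with rfl | hkj
    · simp [hX', Equiv.swap_apply_right, Function.update_apply, hij.symm]
    · rw [Equiv.swap_apply_of_ne_of_ne hki hkj]
  have hfix : ∀ a : Fin h → Fin n, a ∘ Equiv.swap i j = a →
      moore q (fun k => (fmap q h π u)^[(a k : ℕ)] (X' k)) = 0 := by
    intro a heq
    have haij : a i = a j := by
      have := congrFun heq i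
      simp only [Function.comp_apply, Equiv.swap_apply_left] at this
      exact this.symm
    apply Matrix.det_zero_of_row_eq hij
    funext col
    have h1 : X' i = X' j := by
      simp [hX', Function.update_apply, hij, hij.symm]
    simp only [Matrix.of_apply, h1, haij]
  have hswap : ∀ a : Fin h → Fin n,
      moore q (fun k => (fmap q h π u)^[((a ∘ Equiv.swap i j) k : ℕ)] (X' k))
        = - moore q (fun k => (fmap q h π u)^[(a k : ℕ)] (X' k)) := by
    intro a
    have hmat : (Matrix.of fun k col : Fin h =>
          ((fmap q h π u)^[((a (Equiv.swap i j k)) : ℕ)] (X' k)) ^ q ^ (col : ℕ))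
        = (Matrix.of fun k col : Fin h =>
          ((fmap q h π u)^[(a k : ℕ)] (X' k)) ^ q ^ (col : ℕ)).submatrix (Equiv.swap i j) id := by
      ext k col
      simp only [Matrix.of_apply, Matrix.submatrix_apply, id_eq]
      rw [hX'swap k]
    unfold moore
    rw [show (Matrix.of fun k col : Fin h =>
          ((fmap q h π u)^[((a ∘ Equiv.swap i j) k : ℕ)] (X' k)) ^ q ^ (col : ℕ))
        = (Matrix.of fun k col : Fin h =>
          ((fmap q h π u)^[((a (Equiv.swap i j k)) : ℕ)] (X' k)) ^ q ^ (col : ℕ)) from rfl]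
    rw [hmat]
    have := Matrix.det_permute (Equiv.swap i j)
      (Matrix.of fun k col : Fin h =>
        ((fmap q h π u)^[(a k : ℕ)] (X' k)) ^ q ^ (col : ℕ))
    rw [show ((Matrix.of fun k col : Fin h =>
        ((fmap q h π u)^[(a k : ℕ)] (X' k)) ^ q ^ (col : ℕ)).submatrix (⇑(Equiv.swap i j)) id).det
      = _ from this, Equiv.Perm.sign_swap hij]
    simp
  apply Finset.sum_involution (fun a _ => a ∘ Equiv.swap i j)
  · intro a ha
    rw [hswap a]
    ring
  · intro a ha hne hcontra
    exact hne (hfix a hcontra)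
  · intro a ha
    simp only [Finset.mem_filter, Finset.mem_univ, true_and] at ha ⊢
    rw [← ha]
    exact Equiv.sum_comp (Equiv.swap i j) (fun k => ((a k : ℕ)))
  · intro a ha
    funext k
    simp [Function.comp, Equiv.swap_apply_self]

end Moore

section PhiSet

variable {R : Type*} [CommRing R]

/-- Tuples in `{0,…,N-1}^h` of total weight `c`. -/
def phiSet (h N c : ℕ) : Finset (Fin h → ℕ) :=
  (Fintype.piFinset fun _ : Fin h => Finset.range N).filter fun a => ∑ i, a i = c

lemma mem_phiSet {h N c : ℕ} {a : Fin h → ℕ} :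
    a ∈ phiSet h N c ↔ (∀ i, a i < N) ∧ ∑ i, a i = c := by
  simp [phiSet, Fintype.mem_piFinset, Finset.mem_range]

lemma sum_erase_eq {h : ℕ} (a : Fin h → ℕ) (k : Fin h) :
    ∑ l, a l = a k + ∑ l ∈ Finset.univ.erase k, a l :=
  (Finset.add_sum_erase _ _ (Finset.mem_univ k)).symm

lemma sum_update_nat {h : ℕ} (a : Fin h → ℕ) (k : Fin h) (v : ℕ) :
    ∑ l, Function.update a k v l = v + ∑ l ∈ Finset.univ.erase k, a l := by
  classical
  rw [Finset.sum_update_of_mem (Finset.mem_univ k), ← Finset.erase_eq]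

/-- Pigeonhole: if the `k`-th entry vanishes but the total weight exceeds `(h-1)(n-1)`,
some other entry is at least `n`. -/
lemma exists_coord_ge {h n c : ℕ} (k : Fin h) (b : Fin h → ℕ)
    (hsum : ∑ l, b l = c + 1) (hbk : b k = 0) (hc : (h - 1) * (n - 1) ≤ c) :
    ∃ l, l ≠ k ∧ n ≤ b l := by
  by_contra hcon
  push_neg at hcon
  have hb : ∀ l ∈ Finset.univ.erase k, b l ≤ n - 1 := by
    intro l hl
    have hlk : l ≠ k := (Finset.mem_erase.mp hl).1
    have := hcon l hlk
    omega
  have h1 := Finset.sum_le_card_nsmul (Finset.univ.erase k) b (n - 1) hb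
  have hcard : (Finset.univ.erase k).card = h - 1 := by
    rw [Finset.card_erase_of_mem (Finset.mem_univ k), Finset.card_univ, Fintype.card_fin]
  rw [hcard, smul_eq_mul] at h1
  have h2 := sum_erase_eq b k
  rw [hbk, zero_add, hsum] at h2
  rw [← h2] at h1
  omega

/-- Extending the box `{0,…,N-1}` to `{0,…,N}` does not change the sum, provided terms
with a coordinate `≥ N` vanish. -/
lemma sum_phiSet_succ {h N c : ℕ} (G : (Fin h → ℕ) → R)
    (hv : ∀ b, (∃ l, N ≤ b l) → G b = 0) :
    ∑ a ∈ phiSet h N c, G a = ∑ a ∈ phiSet h (N + 1) c, G a := by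
  apply Finset.sum_subset
  · intro a ha
    rw [mem_phiSet] at ha ⊢
    exact ⟨fun i => Nat.lt_succ_of_lt (ha.1 i), ha.2⟩
  · intro b hb hnb
    rw [mem_phiSet] at hb
    apply hv
    by_contra hcon
    push_neg at hcon
    exact hnb (mem_phiSet.mpr ⟨fun i => by have := hb.1 i; have := hcon i; omega, hb.2⟩)

/-- Shifting the `k`-th coordinate up by one. -/
lemma sum_phiSet_shift {h N n c : ℕ} (k : Fin h) (hN : n ≤ N) (hc : (h - 1) * (n - 1) ≤ c)
    (G : (Fin h → ℕ) → R) (hv : ∀ b, (∃ l, l ≠ k ∧ n ≤ b l) → G b = 0) :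
    ∑ a ∈ phiSet h N c, G (Function.update a k (a k + 1))
      = ∑ b ∈ phiSet h (N + 1) (c + 1), G b := by
  classical
  set P : (Fin h → ℕ) → Prop := fun b => 1 ≤ b k ∧ ∀ l, l ≠ k → b l < N with hP
  have hsplit := Finset.sum_filter_add_sum_filter_not (phiSet h (N + 1) (c + 1)) P G
  have hzero : ∑ b ∈ (phiSet h (N + 1) (c + 1)).filter (fun b => ¬ P b), G b = 0 := by
    refine Finset.sum_eq_zero fun b hb => ?_
    rw [Finset.mem_filter, mem_phiSet] at hb
    obtain ⟨⟨hblt, hbsum⟩, hnP⟩ := hb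
    simp only [hP] at hnP
    push_neg at hnP
    rcases Nat.lt_or_ge (b k) 1 with hbk | hbk
    · exact hv b (exists_coord_ge k b hbsum (by omega) hc)
    · obtain ⟨l, hlk, hlN⟩ := hnP hbk
      exact hv b ⟨l, hlk, le_trans hN hlN⟩
  rw [← hsplit, hzero, add_zero]
  refine Finset.sum_nbij' (fun a => Function.update a k (a k + 1))
    (fun b => Function.update b k (b k - 1)) ?_ ?_ ?_ ?_ ?_
  · intro a ha
    beta_reduce
    rw [mem_phiSet] at ha
    obtain ⟨halt, hasum⟩ := ha
    rw [Finset.mem_filter, mem_phiSet]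
    have hsum := sum_update_nat a k (a k + 1)
    have hsum2 := sum_erase_eq a k
    rw [hasum] at hsum2
    refine ⟨⟨fun i => ?_, ?_⟩, ?_, fun l hlk => ?_⟩
    · rcases eq_or_ne i k with rfl | hik
      · simp only [Function.update_self]
        exact Nat.succ_lt_succ (halt i)
      · rw [Function.update_of_ne hik]
        exact Nat.lt_succ_of_lt (halt i)
    · set S := ∑ l ∈ Finset.univ.erase k, a l
      set t := a k
      omega
    · simp
    · rw [Function.update_of_ne hlk]
      exact halt l
  · intro b hb
    beta_reduce
    rw [Finset.mem_filter, mem_phiSet] at hb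
    obtain ⟨⟨hblt, hbsum⟩, hbk, hbl⟩ := hb
    rw [mem_phiSet]
    have hsum := sum_update_nat b k (b k - 1)
    have hsum2 := sum_erase_eq b k
    rw [hbsum] at hsum2
    constructor
    · intro i
      rcases eq_or_ne i k with rfl | hik
      · simp only [Function.update_self]
        have := hblt i
        omega
      · rw [Function.update_of_ne hik]
        exact hbl i hik
    · rw [hsum]
      set S := ∑ l ∈ Finset.univ.erase k, b l
      set t := b k
      omega
  · intro a ha
    beta_reduce
    funext l
    rcases eq_or_ne l k with rfl | hlk
    · simp
    · simp [Function.update_of_ne hlk]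
  · intro b hb
    beta_reduce
    rw [Finset.mem_filter] at hb
    have hbk : 1 ≤ b k := hb.2.1
    funext l
    rcases eq_or_ne l k with rfl | hlk
    · simp only [Function.update_idem, Function.update_self]
      rw [Nat.sub_add_cancel hbk]
    · simp [Function.update_of_ne hlk]
  · intro a ha
    rfl

/-- Converting `Fin n`-valued tuples to `ℕ`-valued tuples. -/
lemma sum_finTuple_eq {h n c : ℕ} (F : (Fin h → ℕ) → R) :
    ∑ a ∈ Finset.univ.filter (fun a : Fin h → Fin n => ∑ i, ((a i : ℕ)) = c),
        F (fun i => (a i : ℕ))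
      = ∑ a ∈ phiSet h n c, F a := by
  classical
  refine Finset.sum_bij (fun a _ => fun i => ((a i : ℕ))) ?_ ?_ ?_ ?_
  · intro a ha
    rw [Finset.mem_filter] at ha
    exact mem_phiSet.mpr ⟨fun i => (a i).isLt, ha.2⟩
  · intro a₁ h₁ a₂ h₂ heq
    funext i
    exact Fin.ext (congrFun heq i)
  · intro b hb
    rw [mem_phiSet] at hb
    refine ⟨fun i => ⟨b i, hb.1 i⟩, ?_, ?_⟩
    · simp only [Finset.mem_filter, Finset.mem_univ, true_and]
      exact hb.2
    · funext i; rfl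
  · intro a ha
    rfl

end PhiSet

section Det

variable {R : Type*} [CommRing R]

/-- Matrix whose columns are `Z^{q}, …, Z^{q^{m}}` followed by a final column `W`. -/
def DmatM (q : ℕ) {m : ℕ} {R : Type*} [CommRing R] (Z W : Fin (m + 1) → R) :
    Matrix (Fin (m + 1)) (Fin (m + 1)) R :=
  Matrix.of fun k j => if j = Fin.last m then W k else Z k ^ q ^ ((j : ℕ) + 1)

/-- The `(k, last)` minor of `DmatM`. -/
def MinorM (q : ℕ) {m : ℕ} {R : Type*} [CommRing R] (Z : Fin (m + 1) → R) (k : Fin (m + 1)) :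
    Matrix (Fin m) (Fin m) R :=
  Matrix.of fun l j => Z (k.succAbove l) ^ q ^ ((j : ℕ) + 1)

lemma neg_one_pow_sq (m : ℕ) : ((-1 : R) ^ m) * ((-1 : R) ^ m) = 1 := by
  rw [← pow_add, ← two_mul, pow_mul]
  norm_num

variable (q : ℕ) {m : ℕ} (π : R) (u : ℕ → R)

lemma det_rot (Z : Fin (m + 1) → R) :
    (Matrix.of fun k j : Fin (m + 1) =>
        if j = Fin.last m then Z k else Z k ^ q ^ ((j : ℕ) + 1)).det
      = (-1 : R) ^ m * moore q Z := by
  have hmat : (Matrix.of fun k j : Fin (m + 1) =>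
        if j = Fin.last m then Z k else Z k ^ q ^ ((j : ℕ) + 1))
      = (Matrix.of fun k j : Fin (m + 1) => Z k ^ q ^ (j : ℕ)).submatrix id
          (finRotate (m + 1)) := by
    ext k j
    simp only [Matrix.of_apply, Matrix.submatrix_apply, id_eq, finRotate_succ_apply]
    rcases eq_or_ne j (Fin.last m) with rfl | hj
    · rw [if_pos rfl, Fin.last_add_one]
      simp
    · rw [if_neg hj, Fin.val_add_one, if_neg hj]
  rw [hmat, Matrix.det_permute', sign_finRotate]
  unfold moore
  simp

lemma det_DmatM (Z W : Fin (m + 1) → R) :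
    (DmatM q Z W).det
      = ∑ k : Fin (m + 1), (-1 : R) ^ ((k : ℕ) + m) * W k * (MinorM q Z k).det := by
  rw [Matrix.det_succ_column (DmatM q Z W) (Fin.last m)]
  refine Finset.sum_congr rfl fun k _ => ?_
  have h1 : DmatM q Z W k (Fin.last m) = W k := by simp [DmatM]
  have h2 : (DmatM q Z W).submatrix k.succAbove (Fin.last m).succAbove = MinorM q Z k := by
    ext l j
    rw [Matrix.submatrix_apply, Fin.succAbove_last]
    have : (j.castSucc : Fin (m + 1)) ≠ Fin.last m := Fin.ne_of_lt (Fin.castSucc_lt_last j)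
    simp only [DmatM, Matrix.of_apply, if_neg this, MinorM, Fin.coe_castSucc]
  rw [h1, h2, Fin.val_last]

/-- The key unconditional identity: `g(μ(Z)) = (-1)^m det(Z^q, …, Z^{q^m}, f(Z))`. -/
lemma gmap_moore (hq : q ≠ 0) (φ : R →+* R) (hφ : ∀ x, φ x = x ^ q) (Z : Fin (m + 1) → R) :
    gmap q (m + 1) π (moore q Z)
      = (-1 : R) ^ m * (DmatM q Z (fun k => fmap q (m + 1) π u (Z k))).det := by
  classical
  set A := Matrix.of fun k j : Fin (m + 1) => Z k ^ q ^ (j : ℕ) with hA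
  set B := Matrix.of fun k j : Fin (m + 1) => Z k ^ q ^ ((j : ℕ) + 1) with hB
  have hmooreA : moore q Z = A.det := rfl
  have hdetq : (moore q Z) ^ q = B.det := by
    have h1 : (qpowHom q hq φ hφ 1) A.det = (A.map (qpowHom q hq φ hφ 1)).det :=
      RingHom.map_det _ _
    have h2 : A.map (qpowHom q hq φ hφ 1) = B := by
      ext k j
      show (Z k ^ q ^ (j : ℕ)) ^ q ^ 1 = Z k ^ q ^ ((j : ℕ) + 1)
      rw [pow_one, ← pow_mul, ← pow_succ]
    have h3 : (qpowHom q hq φ hφ 1) A.det = A.det ^ q := by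
      show A.det ^ q ^ 1 = A.det ^ q
      rw [pow_one]
    rw [hmooreA, ← h3, h1, h2]
  -- decompose the last column of B
  have hcol : ∀ k : Fin (m + 1), B k (Fin.last m)
      = fmap q (m + 1) π u (Z k) + (-π) * Z k
        + ∑ e ∈ Finset.Ico 1 (m + 1), (-(u e)) * Z k ^ q ^ e := by
    intro k
    have : ∑ e ∈ Finset.Ico 1 (m + 1), (-(u e)) * Z k ^ q ^ e
        = -∑ e ∈ Finset.Ico 1 (m + 1), u e * Z k ^ q ^ e := by
      simp [neg_mul]
    rw [this]
    show Z k ^ q ^ ((Fin.last m : ℕ) + 1) = _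
    rw [Fin.val_last]
    unfold fmap
    ring
  have hBupd : B = B.updateCol (Fin.last m) (fun k => B k (Fin.last m)) :=
    (Matrix.updateCol_eq_self B (Fin.last m)).symm
  -- determinant is additive in a column over finite sums
  have hdet_sum : ∀ (F : ℕ → Fin (m + 1) → R) (s : Finset ℕ),
      (B.updateCol (Fin.last m) (fun k => ∑ e ∈ s, F e k)).det
        = ∑ e ∈ s, (B.updateCol (Fin.last m) (F e)).det := by
    intro F s
    induction s using Finset.induction_on with
    | empty =>
      simp only [Finset.sum_empty]
      apply Matrix.det_eq_zero_of_column_eq_zero (Fin.last m)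
      intro k
      simp [Matrix.updateCol_apply]
    | @insert x s hx ih =>
      have : (fun k => ∑ e ∈ insert x s, F e k)
          = (fun k => F x k) + fun k => ∑ e ∈ s, F e k := by
        funext k
        simp [Finset.sum_insert hx]
      rw [this, Matrix.det_updateCol_add, ih, Finset.sum_insert hx]
  have hsplit : B.det
      = (B.updateCol (Fin.last m) (fun k => fmap q (m + 1) π u (Z k))).det
        + (-π) * (B.updateCol (Fin.last m) Z).det
        + ∑ e ∈ Finset.Ico 1 (m + 1),
            (-(u e)) * (B.updateCol (Fin.last m) (fun k => Z k ^ q ^ e)).det := by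
    conv_lhs => rw [hBupd]
    have hcolfun : (fun k => B k (Fin.last m))
        = (fun k => fmap q (m + 1) π u (Z k))
          + ((fun k => (-π) * Z k)
            + fun k => ∑ e ∈ Finset.Ico 1 (m + 1), (-(u e)) * Z k ^ q ^ e) := by
      funext k
      rw [hcol k]
      simp [add_assoc]
    rw [hcolfun, Matrix.det_updateCol_add, Matrix.det_updateCol_add]
    have e1 : (B.updateCol (Fin.last m) (fun k => (-π) * Z k)).det
        = (-π) * (B.updateCol (Fin.last m) Z).det := by
      have hw : (fun k => (-π) * Z k) = (-π) • Z := by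
        funext k; simp
      rw [hw, Matrix.det_updateCol_smul]
    have e2 : (B.updateCol (Fin.last m)
          (fun k => ∑ e ∈ Finset.Ico 1 (m + 1), (-(u e)) * Z k ^ q ^ e)).det
        = ∑ e ∈ Finset.Ico 1 (m + 1),
            (-(u e)) * (B.updateCol (Fin.last m) (fun k => Z k ^ q ^ e)).det := by
      rw [hdet_sum (fun e k => (-(u e)) * Z k ^ q ^ e) (Finset.Ico 1 (m + 1))]
      refine Finset.sum_congr rfl fun e _ => ?_
      have hw : (fun k => (-(u e)) * Z k ^ q ^ e) = (-(u e)) • fun k => Z k ^ q ^ e := by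
        funext k; simp
      rw [hw, Matrix.det_updateCol_smul]
    rw [e1, e2]
    ring
  have hvanish : ∀ e ∈ Finset.Ico 1 (m + 1),
      (-(u e)) * (B.updateCol (Fin.last m) (fun k => Z k ^ q ^ e)).det = 0 := by
    intro e he
    rw [Finset.mem_Ico] at he
    have hj0lt : e - 1 < m + 1 := by omega
    set j0 : Fin (m + 1) := ⟨e - 1, hj0lt⟩ with hj0def
    have hj0 : j0 ≠ Fin.last m := by
      rw [Fin.ne_iff_vne]
      show e - 1 ≠ m
      omega
    have hzero : (B.updateCol (Fin.last m) (fun k => Z k ^ q ^ e)).det = 0 := by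
      apply Matrix.det_zero_of_column_eq hj0
      intro k
      rw [Matrix.updateCol_ne hj0, Matrix.updateCol_self]
      show Z k ^ q ^ ((j0 : ℕ) + 1) = Z k ^ q ^ e
      have : (j0 : ℕ) + 1 = e := by
        show e - 1 + 1 = e
        omega
      rw [this]
    rw [hzero, mul_zero]
  have hrot : (B.updateCol (Fin.last m) Z).det = (-1 : R) ^ m * moore q Z := by
    have hmat : B.updateCol (Fin.last m) Z
        = Matrix.of fun k j : Fin (m + 1) =>
            if j = Fin.last m then Z k else Z k ^ q ^ ((j : ℕ) + 1) := by
      ext k j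
      rw [Matrix.updateCol_apply]
      simp only [hB, Matrix.of_apply]
    rw [hmat, det_rot]
  have hDB : B.updateCol (Fin.last m) (fun k => fmap q (m + 1) π u (Z k))
      = DmatM q Z (fun k => fmap q (m + 1) π u (Z k)) := by
    ext k j
    rw [Matrix.updateCol_apply]
    simp only [hB, DmatM, Matrix.of_apply]
  have hgoal : gmap q (m + 1) π (moore q Z)
      = π * moore q Z + (-1 : R) ^ m * (moore q Z) ^ q := by
    unfold gmap
    norm_num
  rw [hgoal, hdetq, hsplit, Finset.sum_eq_zero hvanish, hrot, hDB, add_zero]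
  linear_combination (-(π * moore q Z)) * neg_one_pow_sq (R := R) m

lemma moore_eq_detDmat (Z : Fin (m + 1) → R) :
    moore q Z = (-1 : R) ^ m * (DmatM q Z Z).det := by
  have h1 : (DmatM q Z Z).det = (-1 : R) ^ m * moore q Z := det_rot q Z
  rw [h1, ← mul_assoc, neg_one_pow_sq, one_mul]

lemma MinorM_congr_offdiag (Z Z' : Fin (m + 1) → R) (k : Fin (m + 1))
    (hZ : ∀ l, l ≠ k → Z l = Z' l) : MinorM q Z k = MinorM q Z' k := by
  ext l j
  show Z (k.succAbove l) ^ q ^ ((j : ℕ) + 1) = Z' (k.succAbove l) ^ q ^ ((j : ℕ) + 1)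
  rw [hZ _ (Fin.succAbove_ne k l)]

lemma MinorM_det_zero (hq : q ≠ 0) (Z : Fin (m + 1) → R) (k : Fin (m + 1)) {l : Fin (m + 1)}
    (hl : l ≠ k) (hZl : Z l = 0) : (MinorM q Z k).det = 0 := by
  obtain ⟨l', hl'⟩ := Fin.exists_succAbove_eq hl
  apply Matrix.det_eq_zero_of_row_eq_zero l'
  intro j
  show Z (k.succAbove l') ^ q ^ ((j : ℕ) + 1) = 0
  rw [hl', hZl, zero_pow (pow_ne_zero _ hq)]

end Det

section Main

variable {R : Type*} [CommRing R]

lemma gmap_finset_sum (q h : ℕ) (π : R) (hq : q ≠ 0) (φ : R →+* R) (hφ : ∀ x, φ x = x ^ q)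
    {ι : Type*} (s : Finset ι) (v : ι → R) :
    gmap q h π (∑ x ∈ s, v x) = ∑ x ∈ s, gmap q h π (v x) := by
  classical
  induction s using Finset.induction_on with
  | empty => simpa using gmap_zero q h π hq
  | insert _ _ hx ih => rw [Finset.sum_insert hx, Finset.sum_insert hx, gmap_add q h π hq φ hφ, ih]

/-- The key inductive step: applying `g` to the weight-`c` Moore sum yields the
weight-`c+1` Moore sum, for tuples annihilated by `f^(n)`. -/
lemma UU_succ (q : ℕ) {m : ℕ} (π : R) (u : ℕ → R) (n N c : ℕ) (hq : q ≠ 0)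
    (φ : R →+* R) (hφ : ∀ x, φ x = x ^ q) (hN : n ≤ N) (hc : m * (n - 1) ≤ c)
    (Y : Fin (m + 1) → R) (HY : ∀ k, (fmap q (m + 1) π u)^[n] (Y k) = 0) :
    gmap q (m + 1) π
        (∑ a ∈ phiSet (m + 1) N c, moore q (fun k => (fmap q (m + 1) π u)^[a k] (Y k)))
      = ∑ b ∈ phiSet (m + 1) N (c + 1),
          moore q (fun k => (fmap q (m + 1) π u)^[b k] (Y k)) := by
  classical
  rw [gmap_finset_sum q (m + 1) π hq φ hφ]
  have step1 : ∀ a ∈ phiSet (m + 1) N c,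
      gmap q (m + 1) π (moore q fun k => (fmap q (m + 1) π u)^[a k] (Y k))
        = ∑ k : Fin (m + 1), (-1 : R) ^ m * ((-1 : R) ^ ((k : ℕ) + m)
            * (fmap q (m + 1) π u)^[a k + 1] (Y k)
            * (MinorM q (fun l => (fmap q (m + 1) π u)^[a l] (Y l)) k).det) := by
    intro a _
    rw [gmap_moore q π u hq φ hφ]
    have hfun : (fun k => fmap q (m + 1) π u ((fmap q (m + 1) π u)^[a k] (Y k)))
        = fun k => (fmap q (m + 1) π u)^[a k + 1] (Y k) := by
      funext k
      rw [← Function.iterate_succ_apply' (fmap q (m + 1) π u)]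
    rw [hfun, det_DmatM, Finset.mul_sum]
  rw [Finset.sum_congr rfl step1, Finset.sum_comm]
  have step2 : ∀ k : Fin (m + 1),
      (∑ a ∈ phiSet (m + 1) N c, (-1 : R) ^ m * ((-1 : R) ^ ((k : ℕ) + m)
          * (fmap q (m + 1) π u)^[a k + 1] (Y k)
          * (MinorM q (fun l => (fmap q (m + 1) π u)^[a l] (Y l)) k).det))
        = ∑ b ∈ phiSet (m + 1) N (c + 1), (-1 : R) ^ m * ((-1 : R) ^ ((k : ℕ) + m)
            * (fmap q (m + 1) π u)^[b k] (Y k)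
            * (MinorM q (fun l => (fmap q (m + 1) π u)^[b l] (Y l)) k).det) := by
    intro k
    have hvG : ∀ b : Fin (m + 1) → ℕ, (∃ l, l ≠ k ∧ n ≤ b l) →
        (-1 : R) ^ m * ((-1 : R) ^ ((k : ℕ) + m)
          * (fmap q (m + 1) π u)^[b k] (Y k)
          * (MinorM q (fun l => (fmap q (m + 1) π u)^[b l] (Y l)) k).det) = 0 := by
      rintro b ⟨l, hlk, hbl⟩
      have h0 : (fmap q (m + 1) π u)^[b l] (Y l) = 0 :=
        fmap_iterate_eq_zero q (m + 1) π u hq (HY l) hbl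
      have hminor : (MinorM q (fun l' => (fmap q (m + 1) π u)^[b l'] (Y l')) k).det = 0 :=
        MinorM_det_zero q hq _ k hlk h0
      rw [hminor, mul_zero, mul_zero]
    have hshift : ∑ a ∈ phiSet (m + 1) N c, (-1 : R) ^ m * ((-1 : R) ^ ((k : ℕ) + m)
          * (fmap q (m + 1) π u)^[a k + 1] (Y k)
          * (MinorM q (fun l => (fmap q (m + 1) π u)^[a l] (Y l)) k).det)
        = ∑ a ∈ phiSet (m + 1) N c, (fun b => (-1 : R) ^ m * ((-1 : R) ^ ((k : ℕ) + m)
            * (fmap q (m + 1) π u)^[b k] (Y k)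
            * (MinorM q (fun l => (fmap q (m + 1) π u)^[b l] (Y l)) k).det))
            (Function.update a k (a k + 1)) := by
      refine Finset.sum_congr rfl fun a _ => ?_
      beta_reduce
      have h1 : Function.update a k (a k + 1) k = a k + 1 := Function.update_self _ _ _
      have h2 : MinorM q (fun l => (fmap q (m + 1) π u)^[(Function.update a k (a k + 1)) l] (Y l)) k
          = MinorM q (fun l => (fmap q (m + 1) π u)^[a l] (Y l)) k := by
        apply MinorM_congr_offdiag
        intro l hlk
        rw [Function.update_of_ne hlk]
      rw [h1, h2]
    rw [hshift, sum_phiSet_shift k hN hc _ hvG]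
    refine (sum_phiSet_succ _ ?_).symm
    rintro b ⟨l, hbl⟩
    rcases eq_or_ne l k with rfl | hlk
    · have h0 : (fmap q (m + 1) π u)^[b l] (Y l) = 0 :=
        fmap_iterate_eq_zero q (m + 1) π u hq (HY l) (le_trans hN hbl)
      rw [h0]
      ring
    · exact hvG b ⟨l, hlk, le_trans hN hbl⟩
  rw [Finset.sum_congr rfl fun k _ => step2 k, Finset.sum_comm]
  refine Finset.sum_congr rfl fun b _ => ?_
  rw [moore_eq_detDmat q (fun k => (fmap q (m + 1) π u)^[b k] (Y k)), det_DmatM, Finset.mul_sum]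

/-- Main Lemma: replacing any slot by its image under `f` applies `g` to `μ_n`. -/
lemma mooreN_update_fmap {m : ℕ} (q n : ℕ) (π : R) (u : ℕ → R) (hq : q ≠ 0)
    (φ : R →+* R) (hφ : ∀ x, φ x = x ^ q)
    (Y : Fin (m + 1) → R) (HY : ∀ k, (fmap q (m + 1) π u)^[n] (Y k) = 0) (i : Fin (m + 1)) :
    mooreN q (m + 1) n π u (Function.update Y i (fmap q (m + 1) π u (Y i)))
      = gmap q (m + 1) π (mooreN q (m + 1) n π u Y) := by
  classical
  have hTTv : ∀ b : Fin (m + 1) → ℕ, (∃ l, n ≤ b l) →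
      moore q (fun k => (fmap q (m + 1) π u)^[b k] (Y k)) = 0 := by
    rintro b ⟨l, hbl⟩
    apply Matrix.det_eq_zero_of_row_eq_zero l
    intro j
    show ((fmap q (m + 1) π u)^[b l] (Y l)) ^ q ^ (j : ℕ) = 0
    rw [fmap_iterate_eq_zero q (m + 1) π u hq (HY l) hbl, zero_pow (pow_ne_zero _ hq)]
  have hmooreN : mooreN q (m + 1) n π u Y
      = ∑ a ∈ phiSet (m + 1) n (((m + 1) - 1) * (n - 1)),
          moore q (fun k => (fmap q (m + 1) π u)^[a k] (Y k)) := by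
    unfold mooreN
    exact sum_finTuple_eq fun b => moore q (fun k => (fmap q (m + 1) π u)^[b k] (Y k))
  have hLHS : mooreN q (m + 1) n π u (Function.update Y i (fmap q (m + 1) π u (Y i)))
      = ∑ a ∈ phiSet (m + 1) n (((m + 1) - 1) * (n - 1)),
          (fun b => moore q (fun k => (fmap q (m + 1) π u)^[b k] (Y k)))
            (Function.update a i (a i + 1)) := by
    unfold mooreN
    have key : ∀ a : Fin (m + 1) → Fin n,
        (fun k => (fmap q (m + 1) π u)^[(a k : ℕ)] ((Function.update Y i
            (fmap q (m + 1) π u (Y i))) k))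
          = fun k => (fmap q (m + 1) π u)^[(Function.update (fun l => ((a l : ℕ))) i
              (((fun l => ((a l : ℕ))) i) + 1)) k] (Y k) := by
      intro a
      funext k
      rcases eq_or_ne k i with rfl | hk
      · simp only [Function.update_self, Function.iterate_succ_apply]
      · simp only [Function.update_of_ne hk]
    have : ∀ a : Fin (m + 1) → Fin n,
        moore q (fun k => (fmap q (m + 1) π u)^[(a k : ℕ)]
            ((Function.update Y i (fmap q (m + 1) π u (Y i))) k))
          = (fun b : Fin (m + 1) → ℕ => (fun b' => moore q
              (fun k => (fmap q (m + 1) π u)^[b' k] (Y k)))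
              (Function.update b i (b i + 1))) (fun l => ((a l : ℕ))) := by
      intro a
      rw [key a]
    exact Eq.trans (Finset.sum_congr rfl fun a _ => this a)
      (sum_finTuple_eq (fun b => (fun b' : Fin (m + 1) → ℕ => moore q
        fun k => (fmap q (m + 1) π u)^[b' k] (Y k)) (Function.update b i (b i + 1))))
  rw [hLHS, hmooreN]
  rw [sum_phiSet_shift i (le_refl n) (le_refl _) _
    (fun b hb => hTTv b ⟨hb.choose, hb.choose_spec.2⟩)]
  rw [sum_phiSet_succ _ hTTv]
  exact (UU_succ q π u n (n + 1) _ hq φ hφ (Nat.le_succ n) (le_refl _) Y HY).symm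

end Main

section Iterates

variable {R : Type*} [CommRing R]

lemma mooreN_update_iterate {m : ℕ} (q n : ℕ) (π : R) (u : ℕ → R) (hq : q ≠ 0)
    (φ : R →+* R) (hφ : ∀ x, φ x = x ^ q)
    (Y : Fin (m + 1) → R) (HY : ∀ k, (fmap q (m + 1) π u)^[n] (Y k) = 0)
    (i : Fin (m + 1)) (t : ℕ) :
    mooreN q (m + 1) n π u (Function.update Y i ((fmap q (m + 1) π u)^[t] (Y i)))
      = (gmap q (m + 1) π)^[t] (mooreN q (m + 1) n π u Y) := by
  induction t with
  | zero => simp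
  | succ t ih =>
    have HY' : ∀ k, (fmap q (m + 1) π u)^[n]
        ((Function.update Y i ((fmap q (m + 1) π u)^[t] (Y i))) k) = 0 := by
      intro k
      rcases eq_or_ne k i with rfl | hk
      · rw [Function.update_self, ← Function.iterate_add_apply, add_comm n t,
          Function.iterate_add_apply, HY k, fmap_iterate_zero q _ π u hq]
      · rw [Function.update_of_ne hk]
        exact HY k
    have key := mooreN_update_fmap q n π u hq φ hφ
      (Function.update Y i ((fmap q (m + 1) π u)^[t] (Y i))) HY' i
    have harg : fmap q (m + 1) π u (Function.update Y i
          ((fmap q (m + 1) π u)^[t] (Y i)) i) = (fmap q (m + 1) π u)^[t + 1] (Y i) := by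
      rw [Function.update_self, ← Function.iterate_succ_apply' (fmap q (m + 1) π u)]
    rw [harg, Function.update_idem] at key
    rw [key, ih]
    exact (Function.iterate_succ_apply' (gmap q (m + 1) π) t _).symm

lemma mooreN_update_iterate_ne {m : ℕ} (q n : ℕ) (π : R) (u : ℕ → R) (hq : q ≠ 0)
    (φ : R →+* R) (hφ : ∀ x, φ x = x ^ q)
    (Y : Fin (m + 1) → R) (HY : ∀ k, (fmap q (m + 1) π u)^[n] (Y k) = 0)
    {i j : Fin (m + 1)} (hij : i ≠ j) (t : ℕ) :
    mooreN q (m + 1) n π u (Function.update Y i ((fmap q (m + 1) π u)^[t] (Y j))) = 0 := by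
  induction t with
  | zero => simpa using mooreN_update_apply_ne q (m + 1) n π u Y hij
  | succ t ih =>
    have HY' : ∀ k, (fmap q (m + 1) π u)^[n]
        ((Function.update Y i ((fmap q (m + 1) π u)^[t] (Y j))) k) = 0 := by
      intro k
      rcases eq_or_ne k i with rfl | hk
      · rw [Function.update_self, ← Function.iterate_add_apply, add_comm n t,
          Function.iterate_add_apply, HY j, fmap_iterate_zero q _ π u hq]
      · rw [Function.update_of_ne hk]
        exact HY k
    have key := mooreN_update_fmap q n π u hq φ hφ
      (Function.update Y i ((fmap q (m + 1) π u)^[t] (Y j))) HY' i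
    have harg : fmap q (m + 1) π u (Function.update Y i
          ((fmap q (m + 1) π u)^[t] (Y j)) i) = (fmap q (m + 1) π u)^[t + 1] (Y j) := by
      rw [Function.update_self, ← Function.iterate_succ_apply' (fmap q (m + 1) π u)]
    rw [harg, Function.update_idem] at key
    rw [key, ih, gmap_zero q (m + 1) π hq]

end Iterates

section ActG

variable {R : Type*} [CommRing R] (q h : ℕ) (π : R)
variable (K : Type*) [Field K] [Algebra K R]

lemma actG_eq_sum (a : Polynomial K) (T : R) :
    actG q h π K a T = a.sum fun mm c => algebraMap K R c * (gmap q h π)^[mm] T := rfl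

lemma actG_zero (T : R) : actG q h π K 0 T = 0 := by
  simp [actG]

lemma actG_add (a b : Polynomial K) (T : R) :
    actG q h π K (a + b) T = actG q h π K a T + actG q h π K b T := by
  rw [actG_eq_sum, actG_eq_sum, actG_eq_sum]
  exact Polynomial.sum_add_index a b _ (fun mm => by simp) (fun mm c1 c2 => by
    rw [map_add, add_mul])

lemma actG_finset_sum {ι : Type*} (s : Finset ι) (P : ι → Polynomial K) (T : R) :
    actG q h π K (∑ x ∈ s, P x) T = ∑ x ∈ s, actG q h π K (P x) T := by
  classical
  induction s using Finset.induction_on with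
  | empty => simpa using actG_zero q h π K T
  | insert _ _ hx ih => rw [Finset.sum_insert hx, Finset.sum_insert hx, actG_add, ih]

end ActG


/-- `Σ_{i=1}^h μ_n(X₁, …, X_{i−1}, (M⋆X)ᵢ, X_{i+1}, …, X_h) = [tr M]_g(μ_n(X₁, …, X_h))`. -/
theorem sum_mooreN_mStar_eq_trace_action
    (p e q h n : ℕ) (hp : p.Prime) (he : 1 ≤ e) (hq : q = p ^ e) (hh : 1 ≤ h) (hn : 1 ≤ n)
    (K : Type*) [Field K] [Fintype K] [DecidableEq K] (hK : Fintype.card K = q)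
    (R : Type*) [CommRing R] [Algebra K R]
    (π : R) (u : ℕ → R) (X : Fin h → R)
    (hX : ∀ i, (fmap q h π u)^[n] (X i) = 0)
    (M : Matrix (Fin h) (Fin h) (Polynomial K)) :
    ∑ i, mooreN q h n π u (Function.update X i (mStar q h π u K M X i))
      = actG q h π K (∑ i, M i i) (mooreN q h n π u X) := by
  classical
  rcases subsingleton_or_nontrivial R with hR | hR
  · exact Subsingleton.elim _ _
  have hq0 : q ≠ 0 := by
    rw [hq]; exact pow_ne_zero _ hp.ne_zero
  have hring : ringChar K = p := by
    have h1 : (Fintype.card K : K) = 0 := Nat.cast_card_eq_zero K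
    have h2 : ringChar K ∣ Fintype.card K :=
      (CharP.cast_eq_zero_iff K (ringChar K) _).mp h1
    have hprime : (ringChar K).Prime := CharP.char_is_prime K (ringChar K)
    rw [hK, hq] at h2
    exact (Nat.prime_dvd_prime_iff_eq hprime hp).mp (hprime.dvd_of_dvd_pow h2)
  haveI : CharP K p := hring ▸ ringChar.charP K
  haveI : CharP R p := charP_of_injective_algebraMap (algebraMap K R).injective p
  haveI := Fact.mk hp
  haveI : ExpChar R p := .prime hp
  set φ : R →+* R := iterateFrobenius R p e with hphi
  have hφ : ∀ x : R, φ x = x ^ q := fun x => by rw [hphi, iterateFrobenius_def, hq]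
  have hfix : ∀ x : K, (algebraMap K R x) ^ q = algebraMap K R x := by
    intro x
    rw [← map_pow, ← hK, FiniteField.pow_card]
  obtain ⟨m, rfl⟩ : ∃ m, h = m + 1 := ⟨h - 1, (Nat.succ_pred_eq_of_pos hh).symm⟩
  have step : ∀ i : Fin (m + 1),
      mooreN q (m + 1) n π u (Function.update X i (mStar q (m + 1) π u K M X i))
        = actG q (m + 1) π K (M i i) (mooreN q (m + 1) n π u X) := by
    intro i
    have h1 : mStar q (m + 1) π u K M X i
        = ∑ j, actF q (m + 1) π u K (M i j) (X j) := rfl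
    rw [h1, mooreN_update_sum q (m + 1) n π u hq0 φ hφ X i Finset.univ _]
    have h2 : ∀ j : Fin (m + 1), mooreN q (m + 1) n π u
        (Function.update X i (actF q (m + 1) π u K (M i j) (X j)))
        = ∑ mm ∈ (M i j).support, algebraMap K R ((M i j).coeff mm)
            * mooreN q (m + 1) n π u
                (Function.update X i ((fmap q (m + 1) π u)^[mm] (X j))) := by
      intro j
      rw [show actF q (m + 1) π u K (M i j) (X j)
          = ∑ mm ∈ (M i j).support, algebraMap K R ((M i j).coeff mm)
              * (fmap q (m + 1) π u)^[mm] (X j) from rfl]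
      rw [mooreN_update_sum q (m + 1) n π u hq0 φ hφ X i _ _]
      exact Finset.sum_congr rfl fun mm _ =>
        mooreN_update_smul q (m + 1) n π u (hfix _) X i _
    rw [Finset.sum_congr rfl fun j _ => h2 j]
    rw [Finset.sum_eq_single i
      (fun j _ hji => ?_) (fun habs => absurd (Finset.mem_univ i) habs)]
    · calc ∑ mm ∈ (M i i).support, algebraMap K R ((M i i).coeff mm)
            * mooreN q (m + 1) n π u
                (Function.update X i ((fmap q (m + 1) π u)^[mm] (X i)))
          = ∑ mm ∈ (M i i).support, algebraMap K R ((M i i).coeff mm)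
            * (gmap q (m + 1) π)^[mm] (mooreN q (m + 1) n π u X) := by
            refine Finset.sum_congr rfl fun mm _ => ?_
            rw [mooreN_update_iterate q n π u hq0 φ hφ X hX i mm]
      _ = actG q (m + 1) π K (M i i) (mooreN q (m + 1) n π u X) := rfl
    · refine Finset.sum_eq_zero fun mm _ => ?_
      rw [mooreN_update_iterate_ne q n π u hq0 φ hφ X hX (Ne.symm hji) mm, mul_zero]
  rw [Finset.sum_congr rfl fun i _ => step i, ← actG_finset_sum]
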